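/- (Lemma 1, unbounded path loss model.) Let M ≥ 2 be an integer, let λ, ρ, D > 0 and α > 2. On a probability space, let N be Poisson distributed with mean λπD², and let (R_i, E_i, S_i)_{i∈ℕ} be i.i.d. random triples, independent of N, such that for each i the coordinates R_i, E_i, S_i are mutually independent, R_i has cumulative distribution function r ↦ (r/D)² on [0, D], E_i has the exponential distribution with rate 1, and S_i has the Gamma distribution with shape M−1 and rate 1. Define γ_i = E_i / ( R_i^α / ρ + S_i ). Then for every x > 0, P( {ω : for all i < N(ω), γ_i(ω) ≤ x} ) = exp( −(2λπ/α) (x+1)^{1−M} (ρ/x)^{2/α} γ_inc(2/α, x D^α / ρ) ), where γ_inc(s, X) := ∫_0^X u^{s−1} e^{−u} du denotes the lower incomplete gamma function. -/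

import Mathlib

open MeasureTheory ProbabilityTheory Real
open scoped NNReal ENNReal

section BeamAux

open Set

private lemma beam_key_subst {x ρ D α : ℝ} (hx : 0 < x) (hρ : 0 < ρ) (hD : 0 < D) (hα : 2 < α) :
    ∫ u in (0:ℝ)..(x * D ^ α / ρ), u ^ (2/α - 1) * Real.exp (-u)
      = α * (x/ρ) ^ (2/α) * ∫ r in Set.Ioc (0:ℝ) D, r * Real.exp (-(x * r ^ α / ρ)) := by
  have hα0 : (0:ℝ) < α := by linarith
  set c : ℝ := x / ρ with hc_def
  have hc : 0 < c := div_pos hx hρ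
  set k : ℝ := c ^ (1/α) with hk_def
  have hk : 0 < k := rpow_pos_of_pos hc _
  have hinv : α * (1/α) = 1 := by field_simp
  have hkα : k ^ α = c := by
    rw [hk_def, ← Real.rpow_mul hc.le, one_div_mul_cancel hα0.ne', rpow_one]
  have hX : x * D ^ α / ρ = c * D ^ α := by ring
  have hXpos : 0 < c * D ^ α := mul_pos hc (rpow_pos_of_pos hD _)
  set X : ℝ := c * D ^ α with hX_def
  rw [hX, intervalIntegral.integral_of_le hXpos.le]
  set g : ℝ → ℝ := (Set.Ioc (0:ℝ) X).indicator (fun u => u ^ (2/α - 1) * Real.exp (-u)) with hg_def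
  have hIoc : ∫ u in Set.Ioc (0:ℝ) X, u ^ (2/α - 1) * Real.exp (-u) = ∫ u in Ioi (0:ℝ), g u := by
    rw [hg_def, integral_indicator measurableSet_Ioc, Measure.restrict_restrict measurableSet_Ioc,
      inter_eq_left.mpr Ioc_subset_Ioi_self]
  rw [hIoc, ← integral_comp_rpow_Ioi g hα0.ne']
  have hL : X ^ (1/α) = k * D := by
    rw [hX_def, mul_rpow hc.le (rpow_nonneg hD.le _), ← hk_def, ← Real.rpow_mul hD.le, hinv,
      rpow_one]
  have hpoint : ∀ y ∈ Ioi (0:ℝ),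
      (|α| * y ^ (α - 1)) • g (y ^ α)
        = (Set.Ioc (0:ℝ) (k*D)).indicator (fun y => α * (y * Real.exp (-(y ^ α)))) y := by
    intro y hy
    have hy0 : (0:ℝ) < y := hy
    have hmem : y ^ α ∈ Set.Ioc (0:ℝ) X ↔ y ∈ Set.Ioc (0:ℝ) (k*D) := by
      constructor
      · rintro ⟨h1, h2⟩
        refine ⟨hy0, ?_⟩
        have := Real.rpow_le_rpow (rpow_nonneg hy0.le α) h2 (by positivity : (0:ℝ) ≤ 1/α)
        rwa [← Real.rpow_mul hy0.le, hinv, rpow_one, hL] at this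
      · rintro ⟨h1, h2⟩
        refine ⟨rpow_pos_of_pos hy0 _, ?_⟩
        calc y ^ α ≤ (k*D) ^ α := Real.rpow_le_rpow hy0.le h2 hα0.le
        _ = X := by rw [mul_rpow hk.le hD.le, hkα]
    rw [hg_def]
    by_cases hmem2 : y ∈ Set.Ioc (0:ℝ) (k*D)
    · rw [Set.indicator_of_mem (hmem.mpr hmem2), Set.indicator_of_mem hmem2]
      have h2a : (y ^ α) ^ (2/α - 1) = y ^ (2 - α) := by
        rw [← Real.rpow_mul hy0.le]
        congr 1
        field_simp
      rw [h2a, smul_eq_mul, abs_of_pos hα0]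
      have hys : y ^ (α - 1) * y ^ (2 - α) = y := by
        rw [← Real.rpow_add hy0]
        norm_num
      calc α * y ^ (α-1) * (y ^ (2-α) * Real.exp (-(y^α)))
          = α * ((y ^ (α-1) * y ^ (2-α)) * Real.exp (-(y^α))) := by ring
        _ = α * (y * Real.exp (-(y ^ α))) := by rw [hys]
    · rw [Set.indicator_of_notMem (fun h => hmem2 (hmem.mp h)),
        Set.indicator_of_notMem hmem2, smul_zero]
  rw [setIntegral_congr_fun measurableSet_Ioi hpoint]
  rw [integral_indicator measurableSet_Ioc, Measure.restrict_restrict measurableSet_Ioc,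
    inter_eq_left.mpr Ioc_subset_Ioi_self]
  rw [← intervalIntegral.integral_of_le (by positivity : (0:ℝ) ≤ k*D)]
  have hscale := intervalIntegral.smul_integral_comp_mul_left
    (a := (0:ℝ)) (b := D) (fun y => α * (y * Real.exp (-(y ^ α)))) k
  rw [mul_zero] at hscale
  rw [← hscale, intervalIntegral.integral_of_le hD.le, smul_eq_mul]
  have hpt : ∀ r ∈ Set.Ioc (0:ℝ) D,
      α * (k * r * Real.exp (-(k*r) ^ α)) = (α*k) * (r * Real.exp (-(x * r ^ α / ρ))) := by
    intro r hr
    have hr0 : 0 < r := hr.1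
    have h1 : (k * r) ^ α = c * r ^ α := by rw [mul_rpow hk.le hr0.le, hkα]
    have h2 : c * r ^ α = x * r ^ α / ρ := by rw [hc_def]; ring
    rw [h1, h2]
    ring
  rw [setIntegral_congr_fun measurableSet_Ioc hpt, integral_const_mul]
  have hkk : (x/ρ) ^ (2/α) = k * k := by
    rw [hk_def, ← Real.rpow_add hc, ← hc_def]
    congr 1
    field_simp
    ring
  rw [hkk]
  ring

private lemma beam_gammaMeasure_Iio_zero (a r : ℝ) : gammaMeasure a r (Set.Iio 0) = 0 := by
  rw [gammaMeasure, withDensity_apply _ measurableSet_Iio]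
  exact lintegral_gammaPDF_of_nonpos le_rfl

private lemma beam_expMeasure_Ioi {t : ℝ} (ht : 0 ≤ t) :
    expMeasure 1 (Set.Ioi t) = ENNReal.ofReal (Real.exp (-t)) := by
  rw [expMeasure, gammaMeasure, withDensity_apply _ measurableSet_Ioi]
  have h1 : ∀ s ∈ Set.Ioi t, gammaPDF 1 1 s = ENNReal.ofReal (Real.exp (-s)) := by
    intro s hs
    have hs0 : 0 ≤ s := le_trans ht (le_of_lt hs)
    rw [gammaPDF_of_nonneg hs0, Real.rpow_one, Real.Gamma_one]
    norm_num
  rw [setLIntegral_congr_fun_ae measurableSet_Ioi (ae_of_all _ h1)]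
  have hint : IntegrableOn (fun s : ℝ => Real.exp (-s)) (Set.Ioi t) := by
    have := exp_neg_integrableOn_Ioi t one_pos
    simpa using this
  rw [← ofReal_integral_eq_lintegral_ofReal hint
    (ae_of_all _ fun s => (Real.exp_pos _).le), integral_exp_neg_Ioi]

private lemma beam_gamma_exp_moment {a x : ℝ} (ha : 0 < a) (hx : 0 < x) :
    ∫⁻ s, ENNReal.ofReal (Real.exp (-(x * s))) ∂(gammaMeasure a 1)
      = ENNReal.ofReal ((1+x) ^ (-a)) := by
  have h1x : (0:ℝ) < 1 + x := by linarith
  have hm1 : Measurable (gammaPDF a 1) := (measurable_gammaPDFReal a 1).ennreal_ofReal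
  have hm2 : Measurable (gammaPDF a (1+x)) := (measurable_gammaPDFReal a (1+x)).ennreal_ofReal
  rw [gammaMeasure, lintegral_withDensity_eq_lintegral_mul _ hm1 (by fun_prop)]
  have hpt : ∀ s : ℝ, gammaPDF a 1 s * ENNReal.ofReal (Real.exp (-(x * s)))
      = ENNReal.ofReal ((1+x) ^ (-a)) * gammaPDF a (1+x) s := by
    intro s
    rcases lt_or_ge s 0 with hs | hs
    · rw [gammaPDF_of_neg hs, gammaPDF_of_neg hs, zero_mul, mul_zero]
    · rw [gammaPDF_of_nonneg hs, gammaPDF_of_nonneg hs,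
        ← ENNReal.ofReal_mul (by positivity), ← ENNReal.ofReal_mul (by positivity)]
      congr 1
      rw [Real.one_rpow]
      rw [Real.rpow_neg h1x.le]
      have hG : Real.Gamma a ≠ 0 := (Real.Gamma_pos_of_pos ha).ne'
      have hpow : ((1+x) ^ a : ℝ) ≠ 0 := (Real.rpow_pos_of_pos h1x a).ne'
      field_simp
      have he : Real.exp (-s) * Real.exp (-(x*s)) = Real.exp (-((1+x)*s)) := by
        rw [← Real.exp_add]; congr 1; ring
      simp only [mul_assoc, ← Real.exp_add]
      ring_nf
  simp_rw [Pi.mul_apply, hpt]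
  rw [lintegral_const_mul _ hm2, lintegral_gammaPDF_eq_one ha h1x, mul_one]

private lemma beam_slice {x c a : ℝ} (hx : 0 < x) (hc : 0 < c) (ha : 0 < a) :
    ((expMeasure 1).prod (gammaMeasure a 1)) {es : ℝ × ℝ | x < es.1 / (c + es.2)}
      = ENNReal.ofReal (Real.exp (-(x * c))) * ENNReal.ofReal ((1+x) ^ (-a)) := by
  haveI : IsProbabilityMeasure (expMeasure 1) := isProbabilityMeasure_expMeasure one_pos
  haveI : IsProbabilityMeasure (gammaMeasure a 1) := isProbabilityMeasure_gammaMeasure ha one_pos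
  have hBm : MeasurableSet {es : ℝ × ℝ | x < es.1 / (c + es.2)} := by
    have : Measurable fun es : ℝ × ℝ => es.1 / (c + es.2) :=
      measurable_fst.div ((measurable_const.add measurable_snd))
    exact this measurableSet_Ioi
  rw [Measure.prod_apply_symm hBm]
  have hae : ∀ᵐ s ∂(gammaMeasure a 1),
      expMeasure 1 ((fun e => (e, s)) ⁻¹' {es : ℝ × ℝ | x < es.1 / (c + es.2)})
        = ENNReal.ofReal (Real.exp (-(x * c))) * ENNReal.ofReal (Real.exp (-(x * s))) := by
    have h0 : ∀ᵐ s ∂(gammaMeasure a 1), 0 ≤ s := by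
      rw [ae_iff]
      have : {s : ℝ | ¬ 0 ≤ s} = Set.Iio 0 := by ext s; simp
      rw [this]
      exact beam_gammaMeasure_Iio_zero a 1
    filter_upwards [h0] with s hs
    have hcs : 0 < c + s := by linarith
    have hset : ((fun e => (e, s)) ⁻¹' {es : ℝ × ℝ | x < es.1 / (c + es.2)})
        = Set.Ioi (x * (c + s)) := by
      ext e
      simp only [Set.mem_preimage, Set.mem_setOf_eq, Set.mem_Ioi, lt_div_iff₀ hcs]
    rw [hset, beam_expMeasure_Ioi (by positivity), ← ENNReal.ofReal_mul (by positivity),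
      ← Real.exp_add]
    congr 2
    ring
  rw [lintegral_congr_ae hae, lintegral_const_mul' _ _ ENNReal.ofReal_ne_top,
    beam_gamma_exp_moment ha hx]

private lemma beam_nu_tail {x ρ D α a : ℝ} (hx : 0 < x) (hρ : 0 < ρ) (hD : 0 < D) (hα : 0 < α)
    (ha : 0 < a) :
    ((volume.restrict (Set.Ioc (0:ℝ) D)).withDensity
          (fun r => ENNReal.ofReal (2*r/D^2))).prod
        ((expMeasure 1).prod (gammaMeasure a 1))
      {p : ℝ × ℝ × ℝ | x < p.2.1 / (p.1 ^ α / ρ + p.2.2)}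
      = ENNReal.ofReal ((1+x) ^ (-a)
          * ∫ r in Set.Ioc (0:ℝ) D, (2*r/D^2) * Real.exp (-(x * r ^ α / ρ))) := by
  haveI : IsProbabilityMeasure (expMeasure 1) := isProbabilityMeasure_expMeasure one_pos
  haveI : IsProbabilityMeasure (gammaMeasure a 1) := isProbabilityMeasure_gammaMeasure ha one_pos
  have hAm : MeasurableSet {p : ℝ × ℝ × ℝ | x < p.2.1 / (p.1 ^ α / ρ + p.2.2)} := by
    have : Measurable fun p : ℝ × ℝ × ℝ => p.2.1 / (p.1 ^ α / ρ + p.2.2) :=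
      (measurable_snd.fst).div (((measurable_fst.pow measurable_const).div_const ρ).add
        measurable_snd.snd)
    exact this measurableSet_Ioi
  rw [Measure.prod_apply hAm]
  have hdm : Measurable fun r : ℝ => ENNReal.ofReal (2*r/D^2) := by fun_prop
  have hsm : Measurable fun r : ℝ =>
      ((expMeasure 1).prod (gammaMeasure a 1))
        (Prod.mk r ⁻¹' {p : ℝ × ℝ × ℝ | x < p.2.1 / (p.1 ^ α / ρ + p.2.2)}) :=
    measurable_measure_prodMk_left hAm
  rw [lintegral_withDensity_eq_lintegral_mul _ hdm hsm]
  have hpt : ∀ r ∈ Set.Ioc (0:ℝ) D,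
      ENNReal.ofReal (2*r/D^2)
          * ((expMeasure 1).prod (gammaMeasure a 1))
            (Prod.mk r ⁻¹' {p : ℝ × ℝ × ℝ | x < p.2.1 / (p.1 ^ α / ρ + p.2.2)})
        = ENNReal.ofReal ((1+x) ^ (-a))
            * ENNReal.ofReal (2*r/D^2 * Real.exp (-(x * r ^ α / ρ))) := by
    intro r hr
    have hr0 : 0 < r := hr.1
    have hcpos : 0 < r ^ α / ρ := div_pos (rpow_pos_of_pos hr0 _) hρ
    have hpre : (Prod.mk r ⁻¹' {p : ℝ × ℝ × ℝ | x < p.2.1 / (p.1 ^ α / ρ + p.2.2)})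
        = {es : ℝ × ℝ | x < es.1 / (r ^ α / ρ + es.2)} := rfl
    rw [hpre, beam_slice hx hcpos ha]
    rw [← ENNReal.ofReal_mul (by positivity), ← ENNReal.ofReal_mul (by positivity),
      ← ENNReal.ofReal_mul (by positivity)]
    congr 1
    have : x * (r ^ α / ρ) = x * r ^ α / ρ := by ring
    rw [this]
    ring
  simp only [Pi.mul_apply]
  rw [setLIntegral_congr_fun_ae measurableSet_Ioc (ae_of_all _ hpt)]
  rw [lintegral_const_mul' _ _ ENNReal.ofReal_ne_top]
  have hcont : Continuous fun r : ℝ => 2*r/D^2 * Real.exp (-(x * r ^ α / ρ)) := by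
    have h1 : Continuous fun r : ℝ => r ^ α := Real.continuous_rpow_const hα.le
    continuity
  have hint : IntegrableOn (fun r : ℝ => 2*r/D^2 * Real.exp (-(x * r ^ α / ρ)))
      (Set.Ioc (0:ℝ) D) := hcont.integrableOn_Ioc
  have hnn : 0 ≤ᵐ[volume.restrict (Set.Ioc (0:ℝ) D)]
      fun r : ℝ => 2*r/D^2 * Real.exp (-(x * r ^ α / ρ)) := by
    rw [Filter.EventuallyLE, ae_restrict_iff' measurableSet_Ioc]
    refine ae_of_all _ fun r hr => ?_
    have hr0 : 0 < r := hr.1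
    positivity
  rw [← ofReal_integral_eq_lintegral_ofReal hint hnn, ← ENNReal.ofReal_mul (by positivity)]

private lemma beam_lint_Ioc {D m : ℝ} (hD : 0 < D) (hm : 0 ≤ m) :
    ∫⁻ t in Set.Ioc (0:ℝ) m, ENNReal.ofReal (2*t/D^2) = ENNReal.ofReal ((m/D)^2) := by
  have hint : IntegrableOn (fun t : ℝ => 2*t/D^2) (Set.Ioc (0:ℝ) m) := by
    apply Continuous.integrableOn_Ioc
    continuity
  have hnn : 0 ≤ᵐ[volume.restrict (Set.Ioc (0:ℝ) m)] fun t : ℝ => 2*t/D^2 := by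
    rw [Filter.EventuallyLE, ae_restrict_iff' measurableSet_Ioc]
    refine ae_of_all _ fun t ht => ?_
    have := ht.1
    positivity
  rw [← ofReal_integral_eq_lintegral_ofReal hint hnn]
  congr 1
  rw [← intervalIntegral.integral_of_le hm]
  have : ∀ t : ℝ, 2*t/D^2 = (2/D^2) * t := fun t => by ring
  simp_rw [this]
  rw [intervalIntegral.integral_const_mul, integral_id]
  field_simp
  ring

private lemma beam_map_R {Ω : Type*} [MeasurableSpace Ω] (P : Measure Ω) [IsProbabilityMeasure P]
    {D : ℝ} (hD : 0 < D) {X : Ω → ℝ} (hXm : Measurable X)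
    (hcdf : ∀ r ∈ Set.Icc (0:ℝ) D, (P {ω | X ω ≤ r}).toReal = (r/D)^2) :
    P.map X = (volume.restrict (Set.Ioc (0:ℝ) D)).withDensity
      (fun r => ENNReal.ofReal (2*r/D^2)) := by
  haveI : IsProbabilityMeasure (P.map X) := Measure.isProbabilityMeasure_map hXm.aemeasurable
  refine Measure.ext_of_Iic _ _ fun b => ?_
  have hmap : (P.map X) (Set.Iic b) = P {ω | X ω ≤ b} := by
    rw [Measure.map_apply hXm measurableSet_Iic]; rfl
  have hRHS : ((volume.restrict (Set.Ioc (0:ℝ) D)).withDensity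
      (fun r => ENNReal.ofReal (2*r/D^2))) (Set.Iic b)
      = ∫⁻ t in Set.Iic b ∩ Set.Ioc (0:ℝ) D, ENNReal.ofReal (2*t/D^2) := by
    rw [withDensity_apply _ measurableSet_Iic, Measure.restrict_restrict measurableSet_Iic]
  have hP0 : P {ω | X ω ≤ (0:ℝ)} = 0 := by
    have h := hcdf 0 ⟨le_refl _, hD.le⟩
    simp only [zero_div] at h
    norm_num at h
    rcases (ENNReal.toReal_eq_zero_iff _).mp h with h' | h'
    · exact h'
    · exact absurd h' (measure_ne_top P _)
  have hPD : P {ω | X ω ≤ D} = 1 := by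
    have h := hcdf D ⟨hD.le, le_refl _⟩
    rw [div_self hD.ne'] at h
    norm_num at h
    rw [← ENNReal.ofReal_toReal (measure_ne_top P _), h, ENNReal.ofReal_one]
  rcases lt_or_ge b 0 with hb | hb
  · have h1 : (P.map X) (Set.Iic b) = 0 := by
      rw [hmap, ← le_zero_iff, ← hP0]
      exact measure_mono fun ω (h : X ω ≤ b) => le_trans h hb.le
    have h2 : Set.Iic b ∩ Set.Ioc (0:ℝ) D = ∅ := by
      ext t; simp only [Set.mem_inter_iff, Set.mem_Iic, Set.mem_Ioc, Set.mem_empty_iff_false,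
        iff_false, not_and]
      intro h1t h2t
      intro h3t
      linarith [h2t]
    rw [h1, hRHS, h2]
    simp
  · rcases le_or_gt b D with hbD | hbD
    · have h1 : (P.map X) (Set.Iic b) = ENNReal.ofReal ((b/D)^2) := by
        rw [hmap, ← ENNReal.ofReal_toReal (measure_ne_top P _), hcdf b ⟨hb, hbD⟩]
      have h2 : Set.Iic b ∩ Set.Ioc (0:ℝ) D = Set.Ioc (0:ℝ) b := by
        ext t
        simp only [Set.mem_inter_iff, Set.mem_Iic, Set.mem_Ioc]
        constructor
        · rintro ⟨ht1, ht2, ht3⟩; exact ⟨ht2, ht1⟩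
        · rintro ⟨ht1, ht2⟩; exact ⟨ht2, ht1, le_trans ht2 hbD⟩
      rw [h1, hRHS, h2, beam_lint_Ioc hD hb]
    · have h1 : (P.map X) (Set.Iic b) = 1 := by
        rw [hmap]
        refine le_antisymm prob_le_one ?_
        rw [← hPD]
        exact measure_mono fun ω (h : X ω ≤ D) => le_trans h hbD.le
      have h2 : Set.Iic b ∩ Set.Ioc (0:ℝ) D = Set.Ioc (0:ℝ) D := by
        rw [Set.inter_eq_right]
        exact fun t ht => le_trans ht.2 hbD.le
      rw [h1, hRHS, h2, beam_lint_Ioc hD hD.le, div_self hD.ne']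
      norm_num

end BeamAux

set_option maxHeartbeats 2000000 in
/-- Lemma 1 (beam outage probability, unbounded path loss `G(d) = d^{-α}`). With a Poisson
number `N` of users (mean `λπD²`), i.i.d. distances `R i` with CDF `(r/D)²` on `[0,D]`,
i.i.d. `Exp(1)` signal powers and i.i.d. `Gamma(M-1,1)` interference powers, all mutually
independent and independent of `N`, the probability that all beam SINRs
`E i / (R i^α / ρ + S i)` are at most `x` equals
`exp(-(2λπ/α) (x+1)^{1-M} (ρ/x)^{2/α} γ_inc(2/α, x D^α / ρ))`. -/
theorem beam_outage_probability_unbounded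
    {Ω : Type*} [MeasurableSpace Ω] (P : Measure Ω) [IsProbabilityMeasure P]
    (M : ℕ) (hM : 2 ≤ M) (lam ρ D α : ℝ) (hlam : 0 < lam) (hρ : 0 < ρ) (hD : 0 < D)
    (hα : 2 < α)
    (N : Ω → ℕ) (hNm : Measurable N)
    (hN : P.map N = poissonMeasure ((lam * π * D ^ 2).toNNReal))
    (R E S : ℕ → Ω → ℝ)
    (hRm : ∀ i, Measurable (R i)) (hEm : ∀ i, Measurable (E i)) (hSm : ∀ i, Measurable (S i))
    (hR : ∀ i, ∀ r ∈ Set.Icc (0 : ℝ) D, (P {ω | R i ω ≤ r}).toReal = (r / D) ^ 2)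
    (hE : ∀ i, P.map (E i) = expMeasure 1)
    (hS : ∀ i, P.map (S i) = gammaMeasure ((M : ℝ) - 1) 1)
    (hiid : iIndepFun
        (fun (p : ℕ × Fin 3) => ![R p.1, E p.1, S p.1] p.2) P)
    (hNind : IndepFun N (fun ω (p : ℕ × Fin 3) => ![R p.1, E p.1, S p.1] p.2 ω) P) :
    ∀ x : ℝ, 0 < x →
      (P {ω | ∀ i < N ω, E i ω / (R i ω ^ α / ρ + S i ω) ≤ x}).toReal
        = Real.exp (-(2 * lam * π / α) * (x + 1) ^ ((1 : ℝ) - M) * (ρ / x) ^ (2 / α) *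
            ∫ u in (0 : ℝ)..(x * D ^ α / ρ), u ^ (2 / α - 1) * Real.exp (-u)) := by
  classical
  intro x hx
  have hα0 : (0:ℝ) < α := by linarith
  set a : ℝ := (M : ℝ) - 1 with ha_def
  have ha : 0 < a := by
    have : (2:ℝ) ≤ (M:ℝ) := by exact_mod_cast hM
    rw [ha_def]; linarith
  set f : ℕ × Fin 3 → Ω → ℝ := fun p => ![R p.1, E p.1, S p.1] p.2 with hf_def
  have hfm : ∀ p, Measurable (f p) := by
    rintro ⟨i, j⟩
    fin_cases j
    · exact hRm i
    · exact hEm i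
    · exact hSm i
  set C : ℕ → Set Ω := fun i => {ω | E i ω / (R i ω ^ α / ρ + S i ω) ≤ x} with hC_def
  have hCm : ∀ i, MeasurableSet (C i) := by
    intro i
    have : Measurable fun ω => E i ω / (R i ω ^ α / ρ + S i ω) :=
      (hEm i).div ((((hRm i).pow measurable_const).div_const ρ).add (hSm i))
    exact this measurableSet_Iic
  -- law of each triple
  set μR : Measure ℝ := (volume.restrict (Set.Ioc (0:ℝ) D)).withDensity
    (fun r => ENNReal.ofReal (2*r/D^2)) with hμR_def
  have hlawR : ∀ i, P.map (R i) = μR := fun i => beam_map_R P hD (hRm i) (hR i)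
  have hpairES : ∀ i, IndepFun (E i) (S i) P := by
    intro i
    have := hiid.indepFun (show ((i, (1:Fin 3)) : ℕ × Fin 3) ≠ (i, 2) by simp)
    exact this
  have hESlaw : ∀ i, P.map (fun ω => (E i ω, S i ω))
      = (expMeasure 1).prod (gammaMeasure a 1) := by
    intro i
    rw [← hE i, ← hS i]
    exact (indepFun_iff_map_prod_eq_prod_map_map (hEm i).aemeasurable
      (hSm i).aemeasurable).mp (hpairES i)
  have hR_ES : ∀ i, IndepFun (R i) (fun ω => (E i ω, S i ω)) P := by
    intro i
    have := hiid.indepFun_prodMk hfm (i, 1) (i, 2) (i, 0) (by simp) (by simp)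
    exact this.symm
  have htriple : ∀ i, P.map (fun ω => (R i ω, (E i ω, S i ω)))
      = μR.prod ((expMeasure 1).prod (gammaMeasure a 1)) := by
    intro i
    rw [← hlawR i, ← hESlaw i]
    exact (indepFun_iff_map_prod_eq_prod_map_map (hRm i).aemeasurable
      ((hEm i).prodMk (hSm i)).aemeasurable).mp (hR_ES i)
  set J : ℝ := ∫ r in Set.Ioc (0:ℝ) D, (2*r/D^2) * Real.exp (-(x * r ^ α / ρ)) with hJ_def
  set q : ℝ := (1+x) ^ (-a) * J with hq_def
  have hq0 : 0 ≤ q := by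
    rw [hq_def]
    have hJ0 : 0 ≤ J := by
      rw [hJ_def]
      refine setIntegral_nonneg measurableSet_Ioc fun r hr => ?_
      have hr0 : 0 < r := hr.1
      positivity
    positivity
  have hCc : ∀ i, P ((C i)ᶜ) = ENNReal.ofReal q := by
    intro i
    have hφm : Measurable fun ω => (R i ω, (E i ω, S i ω)) :=
      (hRm i).prodMk ((hEm i).prodMk (hSm i))
    have hAm : MeasurableSet {p : ℝ × ℝ × ℝ | x < p.2.1 / (p.1 ^ α / ρ + p.2.2)} := by
      have : Measurable fun p : ℝ × ℝ × ℝ => p.2.1 / (p.1 ^ α / ρ + p.2.2) :=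
        (measurable_snd.fst).div (((measurable_fst.pow measurable_const).div_const ρ).add
          measurable_snd.snd)
      exact this measurableSet_Ioi
    have hpre : (fun ω => (R i ω, (E i ω, S i ω)))
        ⁻¹' {p : ℝ × ℝ × ℝ | x < p.2.1 / (p.1 ^ α / ρ + p.2.2)} = (C i)ᶜ := by
      ext ω
      simp [hC_def, Set.mem_setOf_eq, not_le]
    rw [← hpre, ← Measure.map_apply hφm hAm, htriple i, hμR_def,
      beam_nu_tail hx hρ hD hα0 ha, hq_def, hJ_def]
  have hq1 : q ≤ 1 := by
    have := hCc 0 ▸ (prob_le_one (μ := P) (s := (C 0)ᶜ))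
    rwa [ENNReal.ofReal_le_one] at this
  set p : ℝ := 1 - q with hp_def
  have hp0 : 0 ≤ p := by rw [hp_def]; linarith
  have hPC : ∀ i, P (C i) = ENNReal.ofReal p := by
    intro i
    rw [← compl_compl (C i), prob_compl_eq_one_sub (hCm i).compl, hCc i, hp_def,
      ← ENNReal.ofReal_one, ← ENNReal.ofReal_sub _ hq0]
  -- block independence
  have hstep : ∀ n, P ((⋂ i ∈ Finset.range n, C i) ∩ C n)
      = P (⋂ i ∈ Finset.range n, C i) * P (C n) := by
    intro n
    set Sn : Finset (ℕ × Fin 3) := Finset.range n ×ˢ Finset.univ with hSn_def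
    set Tn : Finset (ℕ × Fin 3) := {n} ×ˢ Finset.univ with hTn_def
    have hdisj : Disjoint Sn Tn := by
      rw [Finset.disjoint_left]
      rintro ⟨i, j⟩ hS hT
      simp only [hSn_def, hTn_def, Finset.mem_product, Finset.mem_range,
        Finset.mem_singleton] at hS hT
      omega
    have hIndep := hiid.indepFun_finset Sn Tn hdisj hfm
    have hmS : ∀ (i : ℕ) (j : Fin 3), i < n → ((i, j) : ℕ × Fin 3) ∈ Sn := by
      intro i j hi
      simp [hSn_def, Finset.mem_product, Finset.mem_range, hi]
    have hmT : ∀ j : Fin 3, ((n, j) : ℕ × Fin 3) ∈ Tn := by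
      intro j
      simp [hTn_def, Finset.mem_product]
    set BS : Set ((i : Sn) → ℝ) := {v | ∀ i, ∀ hi : i < n,
        v ⟨(i, 1), hmS i 1 hi⟩
          / (v ⟨(i, 0), hmS i 0 hi⟩ ^ α / ρ + v ⟨(i, 2), hmS i 2 hi⟩) ≤ x} with hBS_def
    set BT : Set ((i : Tn) → ℝ) := {v |
        v ⟨(n, 1), hmT 1⟩ / (v ⟨(n, 0), hmT 0⟩ ^ α / ρ + v ⟨(n, 2), hmT 2⟩) ≤ x} with hBT_def
    have hBSm : MeasurableSet BS := by
      have : BS = ⋂ (i : ℕ), ⋂ (hi : i < n), {v : (i : Sn) → ℝ |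
          v ⟨(i, 1), hmS i 1 hi⟩
            / (v ⟨(i, 0), hmS i 0 hi⟩ ^ α / ρ + v ⟨(i, 2), hmS i 2 hi⟩) ≤ x} := by
        ext v
        simp only [hBS_def, Set.mem_setOf_eq, Set.mem_iInter]
      rw [this]
      refine MeasurableSet.iInter fun i => MeasurableSet.iInter fun hi => ?_
      have hmeas : Measurable fun v : (i : Sn) → ℝ =>
          v ⟨(i, 1), hmS i 1 hi⟩
            / (v ⟨(i, 0), hmS i 0 hi⟩ ^ α / ρ + v ⟨(i, 2), hmS i 2 hi⟩) :=
        by fun_prop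
      exact hmeas measurableSet_Iic
    have hBTm : MeasurableSet BT := by
      have hmeas : Measurable fun v : (i : Tn) → ℝ =>
          v ⟨(n, 1), hmT 1⟩ / (v ⟨(n, 0), hmT 0⟩ ^ α / ρ + v ⟨(n, 2), hmT 2⟩) :=
        by fun_prop
      exact hmeas measurableSet_Iic
    have hpreS : (fun ω (i : Sn) => f i ω) ⁻¹' BS = ⋂ i ∈ Finset.range n, C i := by
      ext ω
      simp only [Set.mem_preimage, hBS_def, Set.mem_setOf_eq, Set.mem_iInter,
        Finset.mem_range, hC_def]
      exact Iff.rfl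
    have hpreT : (fun ω (i : Tn) => f i ω) ⁻¹' BT = C n := by
      ext ω
      simp only [Set.mem_preimage, hBT_def, Set.mem_setOf_eq, hC_def]
      exact Iff.rfl
    have hkey := hIndep.measure_inter_preimage_eq_mul BS BT hBSm hBTm
    rw [hpreS, hpreT] at hkey
    exact hkey
  have hblock : ∀ n, P (⋂ i ∈ Finset.range n, C i) = ENNReal.ofReal p ^ n := by
    intro n
    induction n with
    | zero => simp
    | succ n ih =>
      rw [Finset.range_add_one, Finset.set_biInter_insert, Set.inter_comm, hstep n, ih, hPC n, pow_succ]
  -- decomposition over values of N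
  have hAdef : {ω | ∀ i < N ω, E i ω / (R i ω ^ α / ρ + S i ω) ≤ x}
      = ⋃ n, (N ⁻¹' {n} ∩ ⋂ i ∈ Finset.range n, C i) := by
    ext ω
    simp only [Set.mem_setOf_eq, Set.mem_iUnion, Set.mem_inter_iff, Set.mem_preimage,
      Set.mem_singleton_iff, Set.mem_iInter, Finset.mem_range, hC_def]
    constructor
    · intro h
      exact ⟨N ω, rfl, fun i hi => h i hi⟩
    · rintro ⟨n, hn, h⟩ i hi
      exact h i (hn ▸ hi)
  have hdisjU : Pairwise (Function.onFun Disjoint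
      fun n => N ⁻¹' {n} ∩ ⋂ i ∈ Finset.range n, C i) := by
    intro m n hmn
    refine Set.disjoint_left.mpr ?_
    rintro ω ⟨h1, -⟩ ⟨h2, -⟩
    exact hmn (h1.symm.trans h2)
  have hmeasU : ∀ n, MeasurableSet (N ⁻¹' {n} ∩ ⋂ i ∈ Finset.range n, C i) := by
    intro n
    exact (hNm (measurableSet_singleton n)).inter
      (MeasurableSet.biInter (Set.to_countable _) fun i _ => hCm i)
  have hNterm : ∀ n, P (N ⁻¹' {n} ∩ ⋂ i ∈ Finset.range n, C i)
      = P (N ⁻¹' {n}) * P (⋂ i ∈ Finset.range n, C i) := by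
    intro n
    set BF : Set ((ℕ × Fin 3) → ℝ) := {g | ∀ i, ∀ _ : i < n,
        g (i, 1) / (g (i, 0) ^ α / ρ + g (i, 2)) ≤ x} with hBF_def
    have hBFm : MeasurableSet BF := by
      have : BF = ⋂ (i : ℕ), ⋂ (_ : i < n), {g : (ℕ × Fin 3) → ℝ |
          g (i, 1) / (g (i, 0) ^ α / ρ + g (i, 2)) ≤ x} := by
        ext g
        simp only [hBF_def, Set.mem_setOf_eq, Set.mem_iInter]
      rw [this]
      refine MeasurableSet.iInter fun i => MeasurableSet.iInter fun hi => ?_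
      have hmeas : Measurable fun g : (ℕ × Fin 3) → ℝ =>
          g (i, 1) / (g (i, 0) ^ α / ρ + g (i, 2)) :=
        by fun_prop
      exact hmeas measurableSet_Iic
    have hpre : (fun ω (p : ℕ × Fin 3) => f p ω) ⁻¹' BF = ⋂ i ∈ Finset.range n, C i := by
      ext ω
      simp only [Set.mem_preimage, hBF_def, Set.mem_setOf_eq, Set.mem_iInter,
        Finset.mem_range, hC_def]
      exact Iff.rfl
    rw [← hpre]
    exact hNind.measure_inter_preimage_eq_mul _ _ (measurableSet_singleton n) hBFm
  set μ₀ : ℝ≥0 := (lam * π * D ^ 2).toNNReal with hμ₀_def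
  have hμpos : 0 < lam * π * D ^ 2 := by positivity
  have hPN : ∀ n, P (N ⁻¹' {n}) = ENNReal.ofReal (poissonPMFReal μ₀ n) := by
    intro n
    rw [← Measure.map_apply hNm (measurableSet_singleton n), hN, poissonMeasure,
      Measure.sum_smul_dirac_singleton]
    rfl
  rw [hAdef, measure_iUnion hdisjU hmeasU]
  have hterm : ∀ n : ℕ, P (N ⁻¹' {n} ∩ ⋂ i ∈ Finset.range n, C i)
      = ENNReal.ofReal (poissonPMFReal μ₀ n * p ^ n) := by
    intro n
    rw [hNterm n, hPN n, hblock n, ← ENNReal.ofReal_pow hp0,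
      ← ENNReal.ofReal_mul poissonPMFReal_nonneg]
  simp_rw [hterm]
  rw [ENNReal.tsum_toReal_eq fun n => ENNReal.ofReal_ne_top]
  have htoReal : ∀ n : ℕ, (ENNReal.ofReal (poissonPMFReal μ₀ n * p ^ n)).toReal
      = poissonPMFReal μ₀ n * p ^ n := by
    intro n
    exact ENNReal.toReal_ofReal (mul_nonneg poissonPMFReal_nonneg (pow_nonneg hp0 n))
  simp_rw [htoReal]
  -- evaluate the series
  set m : ℝ := ((μ₀ : ℝ≥0) : ℝ) with hm_def
  have hm_val : m = lam * π * D ^ 2 := by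
    rw [hm_def, hμ₀_def, Real.coe_toNNReal _ hμpos.le]
  have hterm2 : ∀ n : ℕ, poissonPMFReal μ₀ n * p ^ n
      = Real.exp (-m) * ((m * p) ^ n / (n.factorial : ℝ)) := by
    intro n
    rw [poissonPMFReal, mul_pow]
    field_simp
    ring
  simp_rw [hterm2]
  rw [tsum_mul_left]
  have hexp : ∑' n : ℕ, (m * p) ^ n / (n.factorial : ℝ) = Real.exp (m * p) := by
    rw [Real.exp_eq_exp_ℝ, NormedSpace.exp_eq_tsum_div]
  rw [hexp, ← Real.exp_add]
  -- final algebraic identification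
  congr 1
  rw [beam_key_subst hx hρ hD hα]
  have hxplus : (x + 1 : ℝ) ^ ((1:ℝ) - (M:ℝ)) = (1 + x) ^ (-a) := by
    rw [add_comm x 1]
    congr 1
    rw [ha_def]
    ring
  rw [hxplus]
  have hBB : (ρ/x) ^ (2/α) * (x/ρ) ^ (2/α) = 1 := by
    rw [← Real.mul_rpow (by positivity) (by positivity)]
    rw [div_mul_div_comm]
    rw [mul_comm ρ x, div_self (by positivity)]
    exact Real.one_rpow _
  have hJsplit : J = (2/D^2) * ∫ r in Set.Ioc (0:ℝ) D, r * Real.exp (-(x * r ^ α / ρ)) := by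
    rw [hJ_def]
    rw [← integral_const_mul]
    refine setIntegral_congr_fun measurableSet_Ioc fun r hr => ?_
    ring
  rw [hp_def, hq_def, hJsplit, hm_val]
  set A : ℝ := (1 + x) ^ (-a)
  set B1 : ℝ := (ρ/x) ^ (2/α)
  set B2 : ℝ := (x/ρ) ^ (2/α)
  set J2 : ℝ := ∫ r in Set.Ioc (0:ℝ) D, r * Real.exp (-(x * r ^ α / ρ))
  have hD2 : (D:ℝ)^2 ≠ 0 := by positivity
  field_simp
  linear_combination (2*A*J2) * hBB
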